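/- Let N ∈ ℕ and a_0,…,a_N ∈ ℝ. Let b : ℕ → ℝ be any sequence and define z(n) = Σ_{k=0}^{n} b_k · n!/(n−k)!. Then Σ_{j=0}^{N} a_j · (Δ^j z)(n) = 0 for all n ∈ ℕ if and only if Σ_{j=0}^{N} a_j · ((k+j)!/k!) · b_{k+j} = 0 for all k ∈ ℕ. -/

import Mathlib

/-- The forward difference operator acting on sequences. -/
def fwdDiffSeq (u : ℕ → ℝ) : ℕ → ℝ := fun n => u (n + 1) - u n

lemma fwd_of_expansion (d : ℕ → ℝ) (w : ℕ → ℝ)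
    (hw : ∀ n, w n = ∑ k ∈ Finset.range (n+1), d k * (Nat.descFactorial n k : ℝ)) (n : ℕ) :
    fwdDiffSeq w n = ∑ k ∈ Finset.range (n+1),
      (d (k+1) * (k+1)) * (Nat.descFactorial n k : ℝ) := by
  simp only [fwdDiffSeq, hw]
  rw [Finset.sum_range_succ' (fun k => d k * (Nat.descFactorial (n+1) k : ℝ)),
      Finset.sum_range_succ' (fun k => d k * (Nat.descFactorial n k : ℝ))]
  have h2 : ∑ k ∈ Finset.range n, d (k+1) * (Nat.descFactorial n (k+1) : ℝ)
      = ∑ k ∈ Finset.range (n+1), d (k+1) * (Nat.descFactorial n (k+1) : ℝ) := by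
    rw [Finset.sum_range_succ, Nat.descFactorial_eq_zero_iff_lt.mpr (Nat.lt_succ_self n)]
    simp
  simp only [Nat.descFactorial_zero, Nat.cast_one, mul_one]
  rw [h2, add_sub_add_right_eq_sub, ← Finset.sum_sub_distrib]
  apply Finset.sum_congr rfl
  intro k hk
  have hk' : k ≤ n := Nat.lt_succ_iff.mp (Finset.mem_range.mp hk)
  have e1 : ((n+1).descFactorial (k+1) : ℝ) = (n+1) * (n.descFactorial k : ℝ) := by
    rw [Nat.succ_descFactorial_succ]; push_cast; ring
  have e2 : (n.descFactorial (k+1) : ℝ) = ((n:ℝ) - k) * (n.descFactorial k : ℝ) := by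
    rw [Nat.descFactorial_succ]; push_cast [Nat.cast_sub hk']; ring
  rw [e1, e2]; ring

lemma iter_expansion (b : ℕ → ℝ) (z : ℕ → ℝ)
    (hz : ∀ n : ℕ, z n = ∑ k ∈ Finset.range (n + 1), b k * (Nat.descFactorial n k : ℝ)) :
    ∀ j n, (fwdDiffSeq^[j] z) n = ∑ k ∈ Finset.range (n+1),
      (b (k+j) * (Nat.descFactorial (k+j) j : ℝ)) * (Nat.descFactorial n k : ℝ) := by
  intro j
  induction j with
  | zero => intro n; simpa using hz n
  | succ j ih =>
    intro n
    rw [Function.iterate_succ_apply',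
      fwd_of_expansion (fun k => b (k+j) * (Nat.descFactorial (k+j) j : ℝ)) _ ih n]
    apply Finset.sum_congr rfl
    intro k _
    have e : (k + (j+1)).descFactorial (j+1) = (k+1) * (k+1+j).descFactorial j := by
      have h1 : k + (j+1) = (k+1+j-1)+1 := by omega
      rw [show k + (j+1) = k+1+j from by ring, Nat.descFactorial_succ,
        show k+1+j-j = k+1 from by omega]
    rw [e]; push_cast; ring

theorem constant_coefficient_correspondence (N : ℕ) (a : ℕ → ℝ) (b : ℕ → ℝ) (z : ℕ → ℝ)
    (hz : ∀ n : ℕ, z n = ∑ k ∈ Finset.range (n + 1), b k * (Nat.descFactorial n k : ℝ)) :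
    (∀ n : ℕ, ∑ j ∈ Finset.range (N + 1), a j * (fwdDiffSeq^[j] z) n = 0) ↔
    (∀ k : ℕ, ∑ j ∈ Finset.range (N + 1),
      a j * (Nat.descFactorial (k + j) j : ℝ) * b (k + j) = 0) := by
  set c : ℕ → ℝ := fun k => ∑ j ∈ Finset.range (N + 1),
      a j * (Nat.descFactorial (k + j) j : ℝ) * b (k + j) with hc
  have key : ∀ n : ℕ, ∑ j ∈ Finset.range (N + 1), a j * (fwdDiffSeq^[j] z) n
      = ∑ k ∈ Finset.range (n+1), c k * (Nat.descFactorial n k : ℝ) := by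
    intro n
    simp only [iter_expansion b z hz, Finset.mul_sum]
    rw [Finset.sum_comm]
    apply Finset.sum_congr rfl
    intro k _
    rw [hc, Finset.sum_mul]
    apply Finset.sum_congr rfl
    intro j _
    ring
  simp only [key]
  constructor
  · intro h
    suffices hs : ∀ k, c k = 0 by intro k; exact hs k
    intro k
    induction k using Nat.strong_induction_on with
    | _ k ih =>
      have hk := h k
      rw [Finset.sum_range_succ] at hk
      have hz0 : ∑ k' ∈ Finset.range k, c k' * (Nat.descFactorial k k' : ℝ) = 0 := by
        apply Finset.sum_eq_zero
        intro m hm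
        rw [ih m (Finset.mem_range.mp hm)]; ring
      rw [hz0, zero_add, Nat.descFactorial_self] at hk
      exact (mul_eq_zero.mp hk).resolve_right (by positivity)
  · intro h n
    have hs : ∀ k, c k = 0 := h
    apply Finset.sum_eq_zero
    intro k _
    rw [hs k]; ring
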